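/- The set L of primitive gates is a closed subgroup of the unitary group U(d²) acting on ℂᵈ ⊗ ℂᵈ. -/

import Mathlib

open Matrix Kronecker Complex

/-- The tensor (Kronecker) product of two vectors of `ℂᵈ`, as a vector of `ℂᵈ ⊗ ℂᵈ`. -/
def tensorVec {d : ℕ} (x y : Fin d → ℂ) : Fin d × Fin d → ℂ := fun p => x p.1 * y p.2

/-- A vector of `ℂᵈ ⊗ ℂᵈ` is decomposable if it is a tensor product of two vectors. -/
def Decomposable {d : ℕ} (z : Fin d × Fin d → ℂ) : Prop := ∃ u v : Fin d → ℂ, z = tensorVec u v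

/-- A gate on `ℂᵈ ⊗ ℂᵈ` is primitive if it maps decomposable tensors to decomposable tensors. -/
def Primitive {d : ℕ} (V : Matrix (Fin d × Fin d) (Fin d × Fin d) ℂ) : Prop :=
  ∀ x y : Fin d → ℂ, Decomposable (V.mulVec (tensorVec x y))

open Filter Topology

/-- A vector is decomposable iff all its `2 × 2` minors vanish. -/
lemma decomposable_iff {d : ℕ} (z : Fin d × Fin d → ℂ) :
    Decomposable z ↔ ∀ i k j l, z (i, j) * z (k, l) = z (i, l) * z (k, j) := by
  constructor
  · rintro ⟨u, v, rfl⟩ i k j l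
    simp only [tensorVec]
    ring
  · intro h
    by_cases hz : z = 0
    · exact ⟨0, 0, by funext p; simp [hz, tensorVec]⟩
    · obtain ⟨p, hp⟩ : ∃ p, z p ≠ 0 := by
        by_contra hc
        push_neg at hc
        exact hz (funext hc)
      obtain ⟨i₀, j₀⟩ := p
      refine ⟨fun i => z (i, j₀), fun j => z (i₀, j) / z (i₀, j₀), ?_⟩
      funext q
      obtain ⟨i, j⟩ := q
      have hm := h i i₀ j₀ j
      simp only [tensorVec]
      rw [mul_div_assoc', hm, mul_div_assoc, div_self hp, mul_one]

lemma isClosed_decomposable {d : ℕ} : IsClosed {z : Fin d × Fin d → ℂ | Decomposable z} := by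
  have hset : {z : Fin d × Fin d → ℂ | Decomposable z} =
      ⋂ i, ⋂ k, ⋂ j, ⋂ l,
        {z : Fin d × Fin d → ℂ | z (i, j) * z (k, l) = z (i, l) * z (k, j)} := by
    ext z
    simp [decomposable_iff, Set.mem_iInter]
  rw [hset]
  exact isClosed_iInter fun i => isClosed_iInter fun k => isClosed_iInter fun j =>
    isClosed_iInter fun l =>
      isClosed_eq ((continuous_apply (i, j)).mul (continuous_apply (k, l)))
        ((continuous_apply (i, l)).mul (continuous_apply (k, j)))

lemma isClosed_primitive {d : ℕ} :
    IsClosed {V : Matrix (Fin d × Fin d) (Fin d × Fin d) ℂ | Primitive V} := by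
  have hset : {V : Matrix (Fin d × Fin d) (Fin d × Fin d) ℂ | Primitive V} =
      ⋂ x : Fin d → ℂ, ⋂ y : Fin d → ℂ,
        (fun V : Matrix (Fin d × Fin d) (Fin d × Fin d) ℂ => V.mulVec (tensorVec x y)) ⁻¹'
          {z | Decomposable z} := by
    ext V
    simp [Primitive, Set.mem_iInter, Set.preimage]
  rw [hset]
  exact isClosed_iInter fun x => isClosed_iInter fun y =>
    isClosed_decomposable.preimage (continuous_id.matrix_mulVec continuous_const)

lemma primitive_one {d : ℕ} : Primitive (1 : Matrix (Fin d × Fin d) (Fin d × Fin d) ℂ) :=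
  fun x y => ⟨x, y, by rw [Matrix.one_mulVec]⟩

lemma primitive_mul {d : ℕ} {A B : Matrix (Fin d × Fin d) (Fin d × Fin d) ℂ}
    (hA : Primitive A) (hB : Primitive B) : Primitive (A * B) := by
  intro x y
  obtain ⟨u, v, huv⟩ := hB x y
  obtain ⟨s, t, hst⟩ := hA u v
  exact ⟨s, t, by rw [← Matrix.mulVec_mulVec, huv, hst]⟩

lemma primitive_pow {d : ℕ} {A : Matrix (Fin d × Fin d) (Fin d × Fin d) ℂ}
    (hA : Primitive A) : ∀ n : ℕ, Primitive (A ^ n) := by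
  intro n
  induction n with
  | zero => simpa using primitive_one
  | succ m ih => rw [pow_succ]; exact primitive_mul ih hA

/-- The set of unitary matrices is compact. -/
lemma isCompact_unitary_matrix {n : Type*} [Fintype n] [DecidableEq n] :
    IsCompact (unitary (Matrix n n ℂ) : Set (Matrix n n ℂ)) := by
  have hK : IsCompact {M : Matrix n n ℂ | ∀ i j, M i j ∈ Metric.closedBall (0 : ℂ) 1} := by
    have hset : {M : Matrix n n ℂ | ∀ i j, M i j ∈ Metric.closedBall (0 : ℂ) 1} =
        Set.univ.pi fun _ : n => Set.univ.pi fun _ : n => Metric.closedBall (0 : ℂ) 1 := by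
      ext M
      exact ⟨fun h i _ j _ => h i j,
        fun h i j => h i (Set.mem_univ i) j (Set.mem_univ j)⟩
    rw [hset]
    exact isCompact_univ_pi fun _ => isCompact_univ_pi fun _ => isCompact_closedBall 0 1
  have hcl : IsClosed (unitary (Matrix n n ℂ) : Set (Matrix n n ℂ)) := by
    have hset : (unitary (Matrix n n ℂ) : Set (Matrix n n ℂ)) =
        {M | star M * M = 1} ∩ {M | M * star M = 1} := by
      ext M
      exact Unitary.mem_iff
    rw [hset]
    exact (isClosed_eq (continuous_star.mul continuous_id) continuous_const).inter
      (isClosed_eq (continuous_id.mul continuous_star) continuous_const)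
  refine hK.of_isClosed_subset hcl ?_
  intro M hM i j
  have h1 : star M * M = 1 := (Unitary.mem_iff.mp hM).1
  have h2 : (star M * M) j j = (1 : Matrix n n ℂ) j j := by rw [h1]
  rw [Matrix.mul_apply, Matrix.one_apply_eq] at h2
  have h3 : (∑ k, (Complex.normSq (M k j) : ℂ)) = 1 := by
    rw [← h2]
    refine Finset.sum_congr rfl fun k _ => ?_
    simp [Matrix.star_apply, Complex.normSq_eq_conj_mul_self]
  have h4 : (∑ k, Complex.normSq (M k j)) = 1 := by exact_mod_cast h3
  have h5 : Complex.normSq (M i j) ≤ 1 := by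
    rw [← h4]
    exact Finset.single_le_sum (f := fun k => Complex.normSq (M k j))
      (fun k _ => Complex.normSq_nonneg _) (Finset.mem_univ i)
  rw [Metric.mem_closedBall, dist_zero_right]
  have h6 : ‖M i j‖ ^ 2 ≤ 1 := by rwa [← Complex.sq_norm] at h5
  nlinarith [norm_nonneg (M i j)]

instance matrixFirstCountable {m n R : Type*} [Countable m] [Countable n] [TopologicalSpace R]
    [FirstCountableTopology R] :
    FirstCountableTopology (Matrix m n R) :=
  inferInstanceAs (FirstCountableTopology (∀ _ : m, ∀ _ : n, R))

lemma primitive_star {d : ℕ} {V : Matrix (Fin d × Fin d) (Fin d × Fin d) ℂ}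
    (hV : V ∈ unitary (Matrix (Fin d × Fin d) (Fin d × Fin d) ℂ)) (hP : Primitive V) :
    Primitive (star V) := by
  have hu : ∀ m : ℕ, V ^ (m + 1) ∈ (unitary (Matrix (Fin d × Fin d) (Fin d × Fin d) ℂ) :
      Set (Matrix (Fin d × Fin d) (Fin d × Fin d) ℂ)) := fun m => pow_mem hV (m + 1)
  obtain ⟨x, hx, φ, hmono, hlim⟩ :=
    isCompact_unitary_matrix.tendsto_subseq (x := fun m => V ^ (m + 1)) hu
  have hxstar : x * star x = 1 := (Unitary.mem_iff.mp hx).2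
  have hVstar : star V * V = 1 := (Unitary.mem_iff.mp hV).1
  have hlim' : Tendsto (fun m => V ^ (φ (m + 1) + 1)) atTop (𝓝 x) :=
    hlim.comp (tendsto_add_atTop_nat 1)
  have key : Tendsto
      (fun m => star V * (V ^ (φ (m + 1) + 1) * star (V ^ (φ m + 1)))) atTop
      (𝓝 (star V * (x * star x))) :=
    Tendsto.const_mul _ (hlim'.mul hlim.star)
  rw [hxstar, mul_one] at key
  have heq : ∀ m, star V * (V ^ (φ (m + 1) + 1) * star (V ^ (φ m + 1))) =
      V ^ (φ (m + 1) - (φ m + 1)) := by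
    intro m
    have hlt : φ m + 1 ≤ φ (m + 1) := hmono (Nat.lt_succ_self m)
    have harith : φ (m + 1) + 1 = 1 + (φ (m + 1) - (φ m + 1)) + (φ m + 1) := by omega
    have h2 : V ^ (φ m + 1) * star (V ^ (φ m + 1)) = 1 := (Unitary.mem_iff.mp (hu (φ m))).2
    rw [harith, pow_add, pow_add, pow_one]
    simp only [mul_assoc]
    rw [h2, mul_one, ← mul_assoc, hVstar, one_mul]
  rw [show (fun m => star V * (V ^ (φ (m + 1) + 1) * star (V ^ (φ m + 1)))) =
      fun m => V ^ (φ (m + 1) - (φ m + 1)) from funext heq] at key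
  exact isClosed_primitive.mem_of_tendsto key
    (Eventually.of_forall fun m => primitive_pow hP _)

/-- The primitive gates form a closed subgroup of the unitary group of
`ℂᵈ ⊗ ℂᵈ`. -/
theorem stmt7 {d : ℕ} :
    ∃ L : Subgroup (Matrix.unitaryGroup (Fin d × Fin d) ℂ),
      ((L : Set (Matrix.unitaryGroup (Fin d × Fin d) ℂ)) =
        {V : Matrix.unitaryGroup (Fin d × Fin d) ℂ | Primitive (V : Matrix (Fin d × Fin d) (Fin d × Fin d) ℂ)}) ∧
      IsClosed (L : Set (Matrix.unitaryGroup (Fin d × Fin d) ℂ)) := by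
  refine ⟨{ carrier := {V : Matrix.unitaryGroup (Fin d × Fin d) ℂ |
              Primitive (V : Matrix (Fin d × Fin d) (Fin d × Fin d) ℂ)}
            mul_mem' := fun {a b} ha hb => primitive_mul ha hb
            one_mem' := primitive_one
            inv_mem' := fun {a} ha => primitive_star a.2 ha }, rfl, ?_⟩
  exact isClosed_primitive.preimage continuous_subtype_val
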